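/- Let V be a finite set of points in Euclidean d-space and I ⊆ V a subset such that some hyperplane strictly separates I from V\I (a k-set, k = |I|). Then I is not a missing face of the polytope conv(V): it is not the case that I fails to be the vertex set of a face of conv(V) while every proper subset of I is the vertex set of a face. Equivalently, if every proper subset of a k-set I spans a face of conv(V), then I itself spans a face. -/

import Mathlib

open scoped RealInnerProductSpace

private lemma key_entry {d : ℕ} [DecidableEq (EuclideanSpace ℝ (Fin d))]
    (I : Finset (EuclideanSpace ℝ (Fin d)))
    {x z : EuclideanSpace ℝ (Fin d)}
    (hx : x ∈ convexHull ℝ (I : Set (EuclideanSpace ℝ (Fin d))))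
    (hz : z ∉ convexHull ℝ (I : Set (EuclideanSpace ℝ (Fin d))))
    (ν : EuclideanSpace ℝ (Fin d) → ℝ) (hν1 : ∑ v ∈ I, ν v = 1)
    (hνz : ∑ v ∈ I, ν v • v = z) :
    ∃ v ∈ I, ∃ q, q ∈ convexHull ℝ ((I.erase v : Finset _) : Set (EuclideanSpace ℝ (Fin d))) ∧
      (q = x ∨ q ∈ openSegment ℝ z x) := by
  classical
  set T : Set ℝ := Set.Icc (0:ℝ) 1 ∩ {τ | (1-τ) • z + τ • x ∈ convexHull ℝ (I : Set _)} with hT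
  have hcont : Continuous fun τ : ℝ => (1-τ) • z + τ • x := by fun_prop
  have hTclosed : IsClosed T :=
    isClosed_Icc.inter (IsClosed.preimage hcont (I.finite_toSet.isClosed_convexHull (𝕜 := ℝ)))
  have hT1 : (1:ℝ) ∈ T := by
    constructor
    · exact ⟨zero_le_one, le_refl 1⟩
    · simpa using hx
  have hbdd : BddBelow T := ⟨0, fun τ hτ => hτ.1.1⟩
  set τ0 := sInf T with hτ0def
  have hτ0T : τ0 ∈ T := hTclosed.csInf_mem ⟨1, hT1⟩ hbdd
  have hτ0le : τ0 ≤ 1 := csInf_le hbdd hT1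
  have hτ0ge : 0 ≤ τ0 := hτ0T.1.1
  have hqI : (1-τ0) • z + τ0 • x ∈ convexHull ℝ (I : Set _) := hτ0T.2
  have hτ0pos : 0 < τ0 := by
    rcases hτ0ge.lt_or_eq with h | h
    · exact h
    · exfalso; apply hz
      rw [← h] at hqI; simpa using hqI
  obtain ⟨ρ, hρ0, hρ1, hρq⟩ := Finset.mem_convexHull'.1 hqI
  by_cases hzero : ∃ v ∈ I, ρ v = 0
  · obtain ⟨v, hvI, hv0⟩ := hzero
    refine ⟨v, hvI, (1-τ0) • z + τ0 • x, ?_, ?_⟩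
    · rw [Finset.mem_convexHull']
      refine ⟨ρ, fun y hy => hρ0 y (Finset.mem_of_mem_erase hy), ?_, ?_⟩
      · rw [Finset.sum_erase _ hv0]; exact hρ1
      · rw [Finset.sum_erase _ (by rw [hv0]; exact zero_smul ℝ v)]; exact hρq
    · rcases hτ0le.lt_or_eq with h | h
      · right
        exact ⟨1 - τ0, τ0, by linarith, hτ0pos, by ring, rfl⟩
      · left; rw [h]; simp
  · exfalso
    push_neg at hzero
    have hρpos : ∀ v ∈ I, 0 < ρ v := fun v hv => lt_of_le_of_ne (hρ0 v hv) (Ne.symm (hzero v hv))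
    have hIne : I.Nonempty := by
      by_contra h
      rw [Finset.not_nonempty_iff_eq_empty] at h
      simp [h] at hρ1
    set ε0 : ℝ := I.inf' hIne (fun v => ρ v / (|ν v - ρ v| + 1)) with hε0
    have hε0pos : 0 < ε0 := by
      rw [hε0, Finset.lt_inf'_iff]
      intro v hv
      exact div_pos (hρpos v hv) (by positivity)
    set ε : ℝ := min ε0 1 with hε
    have hεpos : 0 < ε := lt_min hε0pos one_pos
    have hεle1 : ε ≤ 1 := min_le_right _ _
    have hεlev : ∀ v ∈ I, ε ≤ ρ v / (|ν v - ρ v| + 1) :=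
      fun v hv => le_trans (min_le_left _ _) (Finset.inf'_le _ hv)
    have hwpos : ∀ v ∈ I, 0 < (1-ε) * ρ v + ε * ν v := by
      intro v hv
      have hd : (0:ℝ) < |ν v - ρ v| + 1 := by positivity
      have h3 : ε * (|ν v - ρ v| + 1) ≤ ρ v := by
        rw [← le_div_iff₀ hd]; exact hεlev v hv
      have h4 : ε * (-(|ν v - ρ v|)) ≤ ε * (ν v - ρ v) :=
        mul_le_mul_of_nonneg_left (neg_abs_le _) hεpos.le
      nlinarith [hεpos]
    set τ' : ℝ := (1-ε) * τ0 with hτ'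
    have hτ'T : τ' ∈ T := by
      constructor
      · constructor
        · have h1 : (0:ℝ) ≤ 1 - ε := by linarith
          positivity
        · nlinarith
      · show (1 - τ') • z + τ' • x ∈ convexHull ℝ (I : Set _)
        rw [Finset.mem_convexHull']
        refine ⟨fun v => (1-ε) * ρ v + ε * ν v, fun y hy => (hwpos y hy).le, ?_, ?_⟩
        · rw [Finset.sum_add_distrib, ← Finset.mul_sum, ← Finset.mul_sum, hρ1, hν1]; ring
        · have : ∑ v ∈ I, ((1-ε) * ρ v + ε * ν v) • v
              = (1-ε) • (∑ v ∈ I, ρ v • v) + ε • (∑ v ∈ I, ν v • v) := by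
            rw [Finset.smul_sum, Finset.smul_sum, ← Finset.sum_add_distrib]
            refine Finset.sum_congr rfl fun v hv => ?_
            rw [smul_smul, smul_smul, ← add_smul]
          rw [this, hρq, hνz, hτ']
          module
    have : τ0 ≤ τ' := csInf_le hbdd hτ'T
    nlinarith [hεpos, hτ0pos]
set_option maxHeartbeats 1000000 in
theorem stmt5 (d : ℕ) (V : Finset (EuclideanSpace ℝ (Fin d)))
    (I : Finset (EuclideanSpace ℝ (Fin d))) (hIV : I ⊆ V)
    -- I is a k-set: some hyperplane strictly separates I from V \ I
    (hsep : ∃ (a : EuclideanSpace ℝ (Fin d)) (c : ℝ),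
      (∀ x ∈ I, ⟪a, x⟫ < c) ∧ ∀ x ∈ V, x ∉ I → c < ⟪a, x⟫)
    -- every proper subset of I spans a face of conv(V)
    (hproper : ∀ J : Finset (EuclideanSpace ℝ (Fin d)), J ⊂ I →
      IsExtreme ℝ (convexHull ℝ (V : Set (EuclideanSpace ℝ (Fin d))))
        (convexHull ℝ (J : Set (EuclideanSpace ℝ (Fin d))))) :
    -- then I itself spans a face of conv(V): I is not a missing face
    IsExtreme ℝ (convexHull ℝ (V : Set (EuclideanSpace ℝ (Fin d))))
      (convexHull ℝ (I : Set (EuclideanSpace ℝ (Fin d)))) := by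
  classical
  obtain ⟨a, c, haI, haV⟩ := hsep
  have hlin : IsLinearMap ℝ (fun u : EuclideanSpace ℝ (Fin d) => ⟪a, u⟫) :=
    ⟨fun u w => inner_add_right a u w, fun r u => real_inner_smul_right a u r⟩
  have hsub : (I : Set (EuclideanSpace ℝ (Fin d))) ⊆ (V : Set _) := Finset.coe_subset.mpr hIV
  have hIlt : ∀ u ∈ convexHull ℝ (I : Set (EuclideanSpace ℝ (Fin d))), ⟪a, u⟫ < c := by
    intro u hu
    exact convexHull_min (fun y hy => haI y hy) (convex_halfSpace_lt hlin c) hu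
  have hVgt : ∀ u ∈ convexHull ℝ ((V \ I : Finset _) : Set (EuclideanSpace ℝ (Fin d))),
      c < ⟪a, u⟫ := by
    intro u hu
    refine convexHull_min (fun y hy => ?_) (convex_halfSpace_gt hlin c) hu
    rw [Finset.coe_sdiff, Set.mem_diff] at hy
    exact haV y hy.1 (by simpa using hy.2)
  constructor
  · exact convexHull_mono hsub
  · intro x1 hx1 x2 hx2 x hxI hxseg
    obtain ⟨t1, t2, ht1, ht2, htsum, hteq⟩ := hxseg
    obtain ⟨w1, hw10, hw11, hw1e⟩ := Finset.mem_convexHull'.1 hx1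
    obtain ⟨w2, hw20, hw21, hw2e⟩ := Finset.mem_convexHull'.1 hx2
    set w : EuclideanSpace ℝ (Fin d) → ℝ := fun v => t1 * w1 v + t2 * w2 v with hw
    have hw0 : ∀ v ∈ V, 0 ≤ w v := fun v hv =>
      add_nonneg (mul_nonneg ht1.le (hw10 v hv)) (mul_nonneg ht2.le (hw20 v hv))
    have hw1 : ∑ v ∈ V, w v = 1 := by
      rw [hw]; simp only [Finset.sum_add_distrib, ← Finset.mul_sum, hw11, hw21]
      simpa using htsum
    have hwe : ∑ v ∈ V, w v • v = x := by
      rw [hw]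
      have : ∑ v ∈ V, (t1 * w1 v + t2 * w2 v) • v
          = t1 • (∑ v ∈ V, w1 v • v) + t2 • (∑ v ∈ V, w2 v • v) := by
        rw [Finset.smul_sum, Finset.smul_sum, ← Finset.sum_add_distrib]
        refine Finset.sum_congr rfl fun v hv => ?_
        rw [smul_smul, smul_smul, ← add_smul]
      rw [this, hw1e, hw2e, hteq]
    set s : ℝ := ∑ v ∈ V \ I, w v with hs
    have hsplit1 : ∑ v ∈ V \ I, w v + ∑ v ∈ I, w v = ∑ v ∈ V, w v :=
      Finset.sum_sdiff hIV
    have hsplitv : ∑ v ∈ V \ I, w v • v + ∑ v ∈ I, w v • v = ∑ v ∈ V, w v • v :=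
      Finset.sum_sdiff hIV
    have hsnn : 0 ≤ s := Finset.sum_nonneg fun v hv => hw0 v (Finset.mem_sdiff.1 hv).1
    rcases hsnn.lt_or_eq with hspos | hszero
    · -- s > 0 : derive x in conv (I.erase v) via the key lemma + extremeness
      set z : EuclideanSpace ℝ (Fin d) := s⁻¹ • ∑ v ∈ V \ I, w v • v with hzdef
      have hzmem : z ∈ convexHull ℝ ((V \ I : Finset _) : Set (EuclideanSpace ℝ (Fin d))) := by
        rw [Finset.mem_convexHull']
        refine ⟨fun v => w v / s,
          fun y hy => div_nonneg (hw0 y (Finset.mem_sdiff.1 hy).1) hspos.le, ?_, ?_⟩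
        · show ∑ y ∈ V \ I, w y / s = 1
          rw [← Finset.sum_div, ← hs]
          field_simp
        · show ∑ y ∈ V \ I, (w y / s) • y = z
          rw [hzdef, Finset.smul_sum]
          refine Finset.sum_congr rfl fun v hv => ?_
          rw [div_eq_inv_mul, smul_smul]
      have hzgt : c < ⟪a, z⟫ := hVgt z hzmem
      have hznotI : z ∉ convexHull ℝ (I : Set (EuclideanSpace ℝ (Fin d))) :=
        fun h => absurd (hIlt z h) (not_lt.2 hzgt.le)
      obtain ⟨lam, hlam0, hlam1, hlame⟩ := Finset.mem_convexHull'.1 hxI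
      have hsumIw : ∑ v ∈ I, w v = 1 - s := by
        rw [hs] at *
        linarith [hsplit1, hw1]
      have hν1 : ∑ v ∈ I, (lam v - w v) / s = 1 := by
        rw [← Finset.sum_div, Finset.sum_sub_distrib, hlam1, hsumIw]
        field_simp
        ring
      have hνz : ∑ v ∈ I, ((lam v - w v) / s) • v = z := by
        have h1 : ∑ v ∈ I, ((lam v - w v) / s) • v
            = s⁻¹ • (∑ v ∈ I, lam v • v - ∑ v ∈ I, w v • v) := by
          rw [smul_sub, Finset.smul_sum, Finset.smul_sum, ← Finset.sum_sub_distrib]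
          refine Finset.sum_congr rfl fun v hv => ?_
          rw [smul_smul, smul_smul, ← sub_smul]
          congr 1
          field_simp
        rw [h1, hlame]
        have h2 : ∑ v ∈ I, w v • v = x - ∑ v ∈ V \ I, w v • v := by
          rw [← hwe, ← hsplitv]; abel
        rw [h2, hzdef]
        congr 1
        abel
      obtain ⟨v, hvI, q, hqJ, hcase⟩ := key_entry I hxI hznotI (fun v => (lam v - w v) / s) hν1 hνz
      have hJ : I.erase v ⊂ I := Finset.erase_ssubset hvI
      have hext := hproper _ hJ
      have hxJ : x ∈ convexHull ℝ ((I.erase v : Finset _) : Set (EuclideanSpace ℝ (Fin d))) := by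
        rcases hcase with rfl | hseg
        · exact hqJ
        · have hzV : z ∈ convexHull ℝ (V : Set (EuclideanSpace ℝ (Fin d))) :=
            convexHull_mono (Finset.coe_subset.mpr (Finset.sdiff_subset)) hzmem
          have hxV : x ∈ convexHull ℝ (V : Set (EuclideanSpace ℝ (Fin d))) :=
            convexHull_mono hsub hxI
          exact hext.2 hxV hzV hqJ (by rwa [openSegment_symm] at hseg)
      have hres := hext.2 hx1 hx2 hxJ ⟨t1, t2, ht1, ht2, htsum, hteq⟩
      have hmono := convexHull_mono
        (Finset.coe_subset.mpr (Finset.erase_subset v I))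
        (𝕜 := ℝ)
      exact hmono hres
    · -- s = 0 : both endpoints already in conv I
      have hzero : ∀ v ∈ V \ I, w v = 0 := by
        intro v hv
        have := (Finset.sum_eq_zero_iff_of_nonneg
          (fun v hv => hw0 v (Finset.mem_sdiff.1 hv).1)).1 hszero.symm
        exact this v hv
      have hz1 : ∀ v ∈ V \ I, w1 v = 0 := by
        intro v hv
        have h : t1 * w1 v + t2 * w2 v = 0 := hzero v hv
        have h1 : 0 ≤ w1 v := hw10 v (Finset.mem_sdiff.1 hv).1
        have h2 : 0 ≤ w2 v := hw20 v (Finset.mem_sdiff.1 hv).1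
        nlinarith
      have hz2 : ∀ v ∈ V \ I, w2 v = 0 := by
        intro v hv
        have h : t1 * w1 v + t2 * w2 v = 0 := hzero v hv
        have h1 : 0 ≤ w1 v := hw10 v (Finset.mem_sdiff.1 hv).1
        have h2 : 0 ≤ w2 v := hw20 v (Finset.mem_sdiff.1 hv).1
        nlinarith
      refine And.left (b := x2 ∈ convexHull ℝ (I : Set (EuclideanSpace ℝ (Fin d)))) ?_
      constructor
      · rw [Finset.mem_convexHull']
        refine ⟨w1, fun y hy => hw10 y (hIV hy), ?_, ?_⟩
        · have := Finset.sum_sdiff hIV (f := w1)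
          rw [Finset.sum_eq_zero hz1, zero_add] at this
          rw [this]; exact hw11
        · have := Finset.sum_sdiff hIV (f := fun v => w1 v • v)
          rw [Finset.sum_eq_zero (fun v hv => by rw [hz1 v hv, zero_smul])] at this
          rw [zero_add] at this
          rw [this, hw1e]
      · rw [Finset.mem_convexHull']
        refine ⟨w2, fun y hy => hw20 y (hIV hy), ?_, ?_⟩
        · have := Finset.sum_sdiff hIV (f := w2)
          rw [Finset.sum_eq_zero hz2, zero_add] at this
          rw [this]; exact hw21
        · have := Finset.sum_sdiff hIV (f := fun v => w2 v • v)
          rw [Finset.sum_eq_zero (fun v hv => by rw [hz2 v hv, zero_smul])] at this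
          rw [zero_add] at this
          rw [this, hw2e]
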